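/- Define g(x) = 1 - Φ(x + μ) - e^{-ε}(1 - Φ(x) - δ(ε)) where δ(ε) = Φ(-ε/μ + μ/2) - e^{ε}Φ(-ε/μ - μ/2), μ > 0, ε > 0. Then g attains its global minimum at x = ε/μ - μ/2 and g(ε/μ - μ/2) = 0. -/

import Mathlib

open MeasureTheory Set Real

/-- The standard normal CDF. -/
noncomputable def stdNormalCDF (x : ℝ) : ℝ :=
  ∫ t in Iic x, (Real.sqrt (2 * π))⁻¹ * Real.exp (-t ^ 2 / 2)

noncomputable def stdNormalPDF (t : ℝ) : ℝ := (Real.sqrt (2 * π))⁻¹ * Real.exp (-t ^ 2 / 2)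

lemma integrable_stdNormalPDF : Integrable stdNormalPDF := by
  have h : Integrable (fun t : ℝ => Real.exp (-(1/2 : ℝ) * t ^ 2)) :=
    integrable_exp_neg_mul_sq (by norm_num)
  have := h.const_mul (Real.sqrt (2 * π))⁻¹
  convert this using 2 with t
  unfold stdNormalPDF
  ring_nf

lemma continuous_stdNormalPDF : Continuous stdNormalPDF := by
  unfold stdNormalPDF
  continuity

lemma integral_stdNormalPDF : ∫ t, stdNormalPDF t = 1 := by
  unfold stdNormalPDF
  rw [integral_const_mul]
  have h : ∫ t : ℝ, Real.exp (-(1/2 : ℝ) * t ^ 2) = Real.sqrt (π / (1/2)) :=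
    integral_gaussian (1/2)
  have h2 : (fun t : ℝ => Real.exp (-t ^ 2 / 2)) = fun t : ℝ => Real.exp (-(1/2 : ℝ) * t ^ 2) := by
    funext t; ring_nf
  rw [h2, h]
  have : π / (1/2 : ℝ) = 2 * π := by ring
  rw [this, inv_mul_cancel₀]
  positivity

lemma stdNormalCDF_symm (x : ℝ) : stdNormalCDF x + stdNormalCDF (-x) = 1 := by
  have hInt := integrable_stdNormalPDF
  have h1 : stdNormalCDF (-x) = ∫ t in Ioi x, stdNormalPDF t := by
    unfold stdNormalCDF
    have := integral_comp_neg_Iic (-x) stdNormalPDF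
    rw [neg_neg] at this
    rw [← this]
    apply setIntegral_congr_fun measurableSet_Iic
    intro t _
    unfold stdNormalPDF
    ring_nf
  rw [h1]
  have h2 : stdNormalCDF x = ∫ t in Iic x, stdNormalPDF t := rfl
  rw [h2, intervalIntegral.integral_Iic_add_Ioi hInt.integrableOn hInt.integrableOn, integral_stdNormalPDF]

lemma hasDerivAt_stdNormalCDF (x : ℝ) : HasDerivAt stdNormalCDF (stdNormalPDF x) x := by
  have hInt := integrable_stdNormalPDF
  have key : ∀ y : ℝ, stdNormalCDF y = stdNormalCDF 0 + ∫ t in (0:ℝ)..y, stdNormalPDF t := by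
    intro y
    have h := intervalIntegral.integral_Iic_sub_Iic hInt.integrableOn (a := 0) (b := y) hInt.integrableOn
    have e1 : stdNormalCDF y = ∫ t in Iic y, stdNormalPDF t := rfl
    have e2 : stdNormalCDF 0 = ∫ t in Iic (0:ℝ), stdNormalPDF t := rfl
    rw [e1, e2]
    linarith
  have hD : HasDerivAt (fun u => ∫ t in (0:ℝ)..u, stdNormalPDF t) (stdNormalPDF x) x :=
    intervalIntegral.integral_hasDerivAt_right hInt.intervalIntegrable
      continuous_stdNormalPDF.aestronglyMeasurable.stronglyMeasurableAtFilter
      continuous_stdNormalPDF.continuousAt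
  have := (hD.const_add (stdNormalCDF 0))
  have hfun : stdNormalCDF = fun y => stdNormalCDF 0 + ∫ t in (0:ℝ)..y, stdNormalPDF t := funext key
  rw [hfun]
  exact this

theorem gaussian_tail_min (μ ε : ℝ) (hμ : 0 < μ) (hε : 0 < ε)
    (g : ℝ → ℝ)
    (hg : ∀ x, g x = 1 - stdNormalCDF (x + μ) -
      Real.exp (-ε) * (1 - stdNormalCDF x -
        (stdNormalCDF (-ε / μ + μ / 2) - Real.exp ε * stdNormalCDF (-ε / μ - μ / 2)))) :
    (∀ x, g (ε / μ - μ / 2) ≤ g x) ∧ g (ε / μ - μ / 2) = 0 := by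
  set x₀ := ε / μ - μ / 2 with hx₀
  -- value at x₀
  have hval : g x₀ = 0 := by
    rw [hg]
    have e2 : -ε / μ + μ / 2 = -x₀ := by rw [hx₀]; ring
    have e3 : -ε / μ - μ / 2 = -(x₀ + μ) := by rw [hx₀]; ring
    rw [e2, e3]
    have s1 := stdNormalCDF_symm x₀
    have s2 := stdNormalCDF_symm (x₀ + μ)
    have hexp : Real.exp (-ε) * Real.exp ε = 1 := by
      rw [← Real.exp_add]; simp
    linear_combination Real.exp (-ε) * s1 - s2 - stdNormalCDF (-(x₀ + μ)) * hexp
  refine ⟨?_, hval⟩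
  -- derivative of g
  have hderiv : ∀ x : ℝ, HasDerivAt g (-stdNormalPDF (x + μ) + Real.exp (-ε) * stdNormalPDF x) x := by
    intro x
    have h1 : HasDerivAt (fun y : ℝ => stdNormalCDF (y + μ)) (stdNormalPDF (x + μ)) x := by
      have := (hasDerivAt_stdNormalCDF (x + μ)).comp x
        ((hasDerivAt_id x).add_const μ)
      simp only [mul_one] at this
      exact this
    have h2 := hasDerivAt_stdNormalCDF x
    have h3 : HasDerivAt (fun y : ℝ => 1 - stdNormalCDF (y + μ) -
        Real.exp (-ε) * (1 - stdNormalCDF y -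
          (stdNormalCDF (-ε / μ + μ / 2) - Real.exp ε * stdNormalCDF (-ε / μ - μ / 2))))
        (-stdNormalPDF (x + μ) + Real.exp (-ε) * stdNormalPDF x) x := by
      have hA : HasDerivAt (fun y : ℝ => 1 - stdNormalCDF (y + μ)) (-stdNormalPDF (x + μ)) x := by
        simpa using (h1.const_sub 1)
      have hB : HasDerivAt (fun y : ℝ => Real.exp (-ε) * (1 - stdNormalCDF y -
          (stdNormalCDF (-ε / μ + μ / 2) - Real.exp ε * stdNormalCDF (-ε / μ - μ / 2))))
          (Real.exp (-ε) * (-stdNormalPDF x)) x := by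
        have : HasDerivAt (fun y : ℝ => 1 - stdNormalCDF y -
            (stdNormalCDF (-ε / μ + μ / 2) - Real.exp ε * stdNormalCDF (-ε / μ - μ / 2)))
            (-stdNormalPDF x) x := by
          simpa using ((h2.const_sub 1).sub_const (stdNormalCDF (-ε / μ + μ / 2) - Real.exp ε * stdNormalCDF (-ε / μ - μ / 2)))
        exact this.const_mul _
      have := hA.sub hB
      rw [show -stdNormalPDF (x + μ) + Real.exp (-ε) * stdNormalPDF x = -stdNormalPDF (x + μ) - Real.exp (-ε) * (-stdNormalPDF x) by ring]
      exact this
    have : g = fun y : ℝ => 1 - stdNormalCDF (y + μ) -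
        Real.exp (-ε) * (1 - stdNormalCDF y -
          (stdNormalCDF (-ε / μ + μ / 2) - Real.exp ε * stdNormalCDF (-ε / μ - μ / 2))) := by
      funext y; exact hg y
    rw [this]
    exact h3
  -- sign of derivative
  have hpdf_pos : ∀ t : ℝ, 0 < stdNormalPDF t := by
    intro t
    unfold stdNormalPDF
    positivity
  have hsign : ∀ x : ℝ, x₀ < x →
      0 < -stdNormalPDF (x + μ) + Real.exp (-ε) * stdNormalPDF x := by
    intro x hx
    rw [hx₀] at hx
    unfold stdNormalPDF
    have harg : -(x + μ) ^ 2 / 2 < -ε + -x ^ 2 / 2 := by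
      have : ε < x * μ + μ ^ 2 / 2 := by
        have : ε / μ < x + μ / 2 := by linarith [hx, hx₀]
        calc ε = (ε / μ) * μ := by field_simp
        _ < (x + μ / 2) * μ := by exact mul_lt_mul_of_pos_right this hμ
        _ = x * μ + μ ^ 2 / 2 := by ring
      nlinarith
    have hlt : Real.exp (-(x + μ) ^ 2 / 2) < Real.exp (-ε) * Real.exp (-x ^ 2 / 2) := by
      rw [← Real.exp_add]; exact Real.exp_lt_exp.mpr harg
    have hs : (0:ℝ) < (Real.sqrt (2 * π))⁻¹ := by positivity
    nlinarith
  have hsign' : ∀ x : ℝ, x < x₀ →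
      -stdNormalPDF (x + μ) + Real.exp (-ε) * stdNormalPDF x < 0 := by
    intro x hx
    rw [hx₀] at hx
    unfold stdNormalPDF
    have harg : -ε + -x ^ 2 / 2 < -(x + μ) ^ 2 / 2 := by
      have : x * μ + μ ^ 2 / 2 < ε := by
        have : x + μ / 2 < ε / μ := by linarith [hx, hx₀]
        calc x * μ + μ ^ 2 / 2 = (x + μ / 2) * μ := by ring
        _ < (ε / μ) * μ := by exact mul_lt_mul_of_pos_right this hμ
        _ = ε := by field_simp
      nlinarith
    have hlt : Real.exp (-ε) * Real.exp (-x ^ 2 / 2) < Real.exp (-(x + μ) ^ 2 / 2) := by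
      rw [← Real.exp_add]; exact Real.exp_lt_exp.mpr harg
    have hs : (0:ℝ) < (Real.sqrt (2 * π))⁻¹ := by positivity
    nlinarith
  -- monotone on [x₀, ∞), antitone on (-∞, x₀]
  have hcont : Continuous g := by
    have hdiff : Differentiable ℝ g := fun x => (hderiv x).differentiableAt
    exact hdiff.continuous
  have hmono : StrictMonoOn g (Ici x₀) := by
    apply strictMonoOn_of_deriv_pos (convex_Ici x₀) (hcont.continuousOn)
    intro x hx
    rw [interior_Ici] at hx
    rw [(hderiv x).deriv]
    exact hsign x hx
  have hanti : StrictAntiOn g (Iic x₀) := by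
    apply strictAntiOn_of_deriv_neg (convex_Iic x₀) (hcont.continuousOn)
    intro x hx
    rw [interior_Iic] at hx
    rw [(hderiv x).deriv]
    exact hsign' x hx
  intro x
  rcases lt_trichotomy x x₀ with h | h | h
  · exact le_of_lt (hanti (mem_Iic.mpr h.le) (mem_Iic.mpr le_rfl) h)
  · rw [h]
  · exact le_of_lt (hmono (mem_Ici.mpr le_rfl) (mem_Ici.mpr h.le) h)
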